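/- Let n ≥ 1, let x_1 < x_2 < ⋯ < x_n be the n distinct real roots of the probabilist Hermite polynomial He_n, and define the weights w_k = n!·√(2π) / (He_n′(x_k))², where He_n′ is the derivative of He_n. Then for every polynomial p with real coefficients of degree at most 2n − 1, ∫_{−∞}^{∞} p(x)·e^{−x²/2} dx = Σ_{k=1}^{n} w_k·p(x_k). -/

import Mathlib

open Polynomial Real MeasureTheory Filter

noncomputable def He (n : ℕ) : ℝ[X] := (Polynomial.hermite n).map (Int.castRingHom ℝ)

lemma He_monic (n : ℕ) : (He n).Monic := (hermite_monic n).map _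
lemma He_natDegree (n : ℕ) : (He n).natDegree = n := by
  simpa [He] using (hermite_monic n).natDegree_map (Int.castRingHom ℝ) ▸ natDegree_hermite
lemma He_zero : He 0 = 1 := by simp [He, hermite_zero]
lemma He_one : He 1 = X := by simp [He, hermite_one]
lemma He_succ (n : ℕ) : He (n + 1) = X * He n - derivative (He n) := by
  simp [He, hermite_succ, Polynomial.derivative_map, Polynomial.map_mul]
lemma derivative_He (n : ℕ) : derivative (He (n + 1)) = C ((n : ℝ) + 1) * He n := by
  induction n with
  | zero => simp [He_one, He_zero]
  | succ n ih =>
    rw [He_succ (n+1), derivative_sub, derivative_mul, derivative_X, one_mul, ih,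
      derivative_mul, derivative_C, zero_mul, zero_add, He_succ n]
    have hC : (C ((((n:ℕ)+1 : ℕ):ℝ) + 1) : ℝ[X]) = C ((n:ℝ) + 1) + C 1 := by
      rw [← C_add]; push_cast; ring_nf
    rw [hC, C_1]
    ring

lemma He_rec (n : ℕ) (t : ℝ) :
    Polynomial.eval t (He (n + 2)) =
      t * Polynomial.eval t (He (n + 1)) - ((n : ℝ) + 1) * Polynomial.eval t (He n) := by
  rw [He_succ (n + 1), derivative_He n]
  simp

/-- Christoffel–Darboux identity for probabilist Hermite polynomials. -/
lemma CD (N : ℕ) (t y : ℝ) :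
    (t - y) * ∑ j ∈ Finset.range (N + 1),
        Polynomial.eval t (He j) * Polynomial.eval y (He j) / (j.factorial : ℝ)
      = (Polynomial.eval t (He (N + 1)) * Polynomial.eval y (He N)
          - Polynomial.eval t (He N) * Polynomial.eval y (He (N + 1))) / (N.factorial : ℝ) := by
  induction N with
  | zero => simp [He_zero, He_one]
  | succ N ih =>
    rw [Finset.sum_range_succ, mul_add, ih, He_rec N t, He_rec N y]
    have hF : ((N.factorial : ℝ)) ≠ 0 := by exact_mod_cast N.factorial_ne_zero
    have hfs : (((N + 1).factorial : ℝ)) = ((N : ℝ) + 1) * (N.factorial : ℝ) := by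
      push_cast [Nat.factorial_succ]; ring
    rw [hfs]
    have hN1 : ((N : ℝ) + 1) ≠ 0 := by positivity
    field_simp
    ring

lemma integrable_pow_gauss (k : ℕ) :
    Integrable (fun t : ℝ => t ^ k * Real.exp (-t ^ 2 / 2)) := by
  have h1 : Integrable (fun t : ℝ => Real.exp (-(1/2 : ℝ) * t ^ 2)) :=
    integrable_exp_neg_mul_sq (by norm_num)
  have h2 : Integrable (fun t : ℝ => Real.exp (-(1/4 : ℝ) * t ^ 2)) :=
    integrable_exp_neg_mul_sq (by norm_num)
  refine (h1.add ((h2.const_mul ((4:ℝ) ^ k * k.factorial)))).mono' ?_ ?_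
  · exact ((continuous_pow k).mul (Real.continuous_exp.comp (by continuity))).aestronglyMeasurable
  · refine Filter.Eventually.of_forall (fun t => ?_)
    have hb : (t ^ 2 / 4) ^ k / (k.factorial : ℝ) ≤ Real.exp (t ^ 2 / 4) := by
      calc (t ^ 2 / 4) ^ k / (k.factorial : ℝ)
          ≤ ∑ i ∈ Finset.range (k + 1), (t ^ 2 / 4) ^ i / (i.factorial : ℝ) := by
            refine Finset.single_le_sum (f := fun i => (t ^ 2 / 4) ^ i / (i.factorial : ℝ))
              (fun i _ => by positivity) (Finset.self_mem_range_succ k)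
        _ ≤ Real.exp (t ^ 2 / 4) := Real.sum_le_exp_of_nonneg (by positivity) _
    have hfac : (0:ℝ) < (k.factorial : ℝ) := by exact_mod_cast k.factorial_pos
    have hpow : |t| ^ k ≤ 1 + (4:ℝ) ^ k * k.factorial * Real.exp (t ^ 2 / 4) := by
      have h2k : (t ^ 2) ^ k ≤ (4:ℝ) ^ k * k.factorial * Real.exp (t ^ 2 / 4) := by
        have := (div_le_iff₀ hfac).mp hb
        calc (t ^ 2) ^ k = (4:ℝ)^k * (t ^ 2 / 4) ^ k := by
              rw [div_pow, ← mul_div_assoc, mul_comm, mul_div_assoc, div_self (by positivity),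
                mul_one]
          _ ≤ (4:ℝ)^k * (Real.exp (t ^ 2 / 4) * k.factorial) := by
              exact mul_le_mul_of_nonneg_left this (by positivity)
          _ = (4:ℝ) ^ k * k.factorial * Real.exp (t ^ 2 / 4) := by ring
      rcases le_total (|t|) 1 with h | h
      · have : |t| ^ k ≤ 1 := pow_le_one₀ (abs_nonneg t) h
        have hpos : (0:ℝ) ≤ (4:ℝ) ^ k * k.factorial * Real.exp (t ^ 2 / 4) := by positivity
        linarith
      · have h1' : |t| ^ k ≤ |t| ^ (2 * k) := pow_le_pow_right₀ h (by omega)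
        have h2' : |t| ^ (2 * k) = (t ^ 2) ^ k := by
          rw [pow_mul, sq_abs]
        linarith [h2k, h1', h2'.le]
    have := mul_le_mul_of_nonneg_right hpow (Real.exp_pos (-t ^ 2 / 2)).le
    calc ‖t ^ k * Real.exp (-t ^ 2 / 2)‖ = |t| ^ k * Real.exp (-t ^ 2 / 2) := by
          rw [norm_mul, norm_pow, Real.norm_eq_abs, Real.norm_eq_abs,
            abs_of_pos (Real.exp_pos _)]
      _ ≤ (1 + (4:ℝ) ^ k * k.factorial * Real.exp (t ^ 2 / 4)) * Real.exp (-t ^ 2 / 2) := this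
      _ = Real.exp (-(1/2) * t ^ 2) + (4:ℝ) ^ k * k.factorial *
            (Real.exp (t ^ 2 / 4) * Real.exp (-t ^ 2 / 2)) := by ring_nf
      _ = Real.exp (-(1/2) * t ^ 2) + (4:ℝ) ^ k * k.factorial * Real.exp (-(1/4) * t ^ 2) := by
          rw [← Real.exp_add]; ring_nf
      _ = ((fun t => Real.exp (-(1/2) * t^2)) +
            fun x => (4:ℝ)^k * (k.factorial:ℝ) * Real.exp (-(1/4) * x^2)) t := by simp

lemma integrable_eval_gauss (P : ℝ[X]) :
    Integrable (fun t : ℝ => Polynomial.eval t P * Real.exp (-t ^ 2 / 2)) := by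
  have h : ∀ t : ℝ, Polynomial.eval t P * Real.exp (-t ^ 2 / 2) =
      ∑ i ∈ Finset.range (P.natDegree + 1),
        P.coeff i * (t ^ i * Real.exp (-t ^ 2 / 2)) := by
    intro t
    rw [Polynomial.eval_eq_sum_range, Finset.sum_mul]
    simp [mul_assoc]
  simp_rw [h]
  exact integrable_finset_sum _ (fun i _ => (integrable_pow_gauss i).const_mul _)

lemma integral_deriv_gauss (P : ℝ[X]) :
    ∫ t : ℝ, Polynomial.eval t (derivative P - X * P) * Real.exp (-t ^ 2 / 2) = 0 := by
  refine integral_eq_zero_of_hasDerivAt_of_integrable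
    (f := fun t : ℝ => Polynomial.eval t P * Real.exp (-t ^ 2 / 2)) (fun t => ?_)
    (integrable_eval_gauss _) (integrable_eval_gauss _)
  have h0 : HasDerivAt (fun t : ℝ => -t ^ 2 / 2) (-t) t := by
    have h := (hasDerivAt_pow 2 t).neg.div_const 2
    simp only [Nat.reduceSub, pow_one] at h
    refine h.congr_deriv ?_
    ring
  have hg := h0.exp
  have hP := P.hasDerivAt t
  have := hP.mul hg
  refine this.congr_deriv ?_
  simp only [eval_sub, eval_mul, eval_X]
  ring

lemma moment_step (m j : ℕ) :
    ∫ t : ℝ, Polynomial.eval t (X ^ m * He (j + 1)) * Real.exp (-t ^ 2 / 2)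
      = m * ∫ t : ℝ, Polynomial.eval t (X ^ (m - 1) * He j) * Real.exp (-t ^ 2 / 2) := by
  have h := integral_deriv_gauss (X ^ m * He j)
  have hpoly : derivative (X ^ m * He j) - X * (X ^ m * He j)
      = C (m : ℝ) * (X ^ (m - 1) * He j) - X ^ m * He (j + 1) := by
    rw [derivative_mul, derivative_X_pow, He_succ]; ring
  rw [hpoly] at h
  have hsplit : (fun t : ℝ =>
      Polynomial.eval t (C (m : ℝ) * (X ^ (m - 1) * He j) - X ^ m * He (j + 1)) *
        Real.exp (-t ^ 2 / 2))
      = fun t : ℝ => (m : ℝ) * (Polynomial.eval t (X ^ (m - 1) * He j) * Real.exp (-t ^ 2 / 2))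
        - Polynomial.eval t (X ^ m * He (j + 1)) * Real.exp (-t ^ 2 / 2) := by
    funext t; simp; ring
  rw [hsplit] at h
  have hA := (integrable_eval_gauss (X ^ (m - 1) * He j)).const_mul (m : ℝ)
  have hB := integrable_eval_gauss (X ^ m * He (j + 1))
  rw [integral_sub hA hB, integral_const_mul] at h
  linarith

lemma integral_pow_He (m j : ℕ) (h : m ≤ j) :
    ∫ t : ℝ, Polynomial.eval t (X ^ m * He j) * Real.exp (-t ^ 2 / 2)
      = if m = j then (m.factorial : ℝ) * Real.sqrt (2 * π) else 0 := by
  induction m generalizing j with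
  | zero =>
    cases j with
    | zero =>
      have hg : ∫ t : ℝ, Real.exp (-(1/2 : ℝ) * t ^ 2) = Real.sqrt (π / (1/2)) :=
        integral_gaussian (1/2)
      have h1 : (fun t : ℝ => Polynomial.eval t (X ^ 0 * He 0) * Real.exp (-t ^ 2 / 2))
          = fun t : ℝ => Real.exp (-(1/2 : ℝ) * t ^ 2) := by
        funext t; rw [He_zero]; simp; ring_nf
      rw [h1, hg, if_pos rfl, show π / (1/2 : ℝ) = 2 * π by ring]
      simp
    | succ j =>
      rw [moment_step 0 j]
      simp
  | succ m ih =>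
    cases j with
    | zero => omega
    | succ j =>
      have hmj : m ≤ j := by omega
      rw [moment_step (m + 1) j, Nat.succ_sub_one, ih j hmj]
      by_cases hc : m = j
      · subst hc
        simp only [if_pos rfl, if_pos (rfl : m + 1 = m + 1), Nat.factorial_succ]
        push_cast; ring
      · have : ¬ (m + 1 = j + 1) := by omega
        simp [hc, this]

lemma integral_He_gauss (j : ℕ) :
    ∫ t : ℝ, Polynomial.eval t (He j) * Real.exp (-t ^ 2 / 2)
      = if j = 0 then Real.sqrt (2 * π) else 0 := by
  have := integral_pow_He 0 j (Nat.zero_le j)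
  simp only [pow_zero, one_mul, Nat.factorial_zero, Nat.cast_one] at this
  rw [this]
  by_cases hj : j = 0 <;> simp [hj, eq_comm]

lemma integral_Q_mul_He (n : ℕ) (Q : ℝ[X]) (hQ : Q.natDegree < n) :
    ∫ t : ℝ, Polynomial.eval t (Q * He n) * Real.exp (-t ^ 2 / 2) = 0 := by
  have hrepr : Q * He n = ∑ i ∈ Finset.range n, C (Q.coeff i) * (X ^ i * He n) := by
    conv_lhs => rw [Polynomial.as_sum_range' Q n hQ]
    rw [Finset.sum_mul]
    refine Finset.sum_congr rfl fun i _ => ?_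
    rw [← Polynomial.C_mul_X_pow_eq_monomial, mul_assoc]
  rw [hrepr]
  have hfun : (fun t : ℝ =>
      Polynomial.eval t (∑ i ∈ Finset.range n, C (Q.coeff i) * (X ^ i * He n)) *
        Real.exp (-t ^ 2 / 2))
      = fun t : ℝ => ∑ i ∈ Finset.range n,
          Q.coeff i * (Polynomial.eval t (X ^ i * He n) * Real.exp (-t ^ 2 / 2)) := by
    funext t
    rw [Polynomial.eval_finset_sum, Finset.sum_mul]
    refine Finset.sum_congr rfl fun i _ => ?_
    simp [mul_assoc]
  rw [hfun, integral_finset_sum _ (fun i _ => (integrable_eval_gauss _).const_mul _)]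
  refine Finset.sum_eq_zero fun i hi => ?_
  rw [integral_const_mul, integral_pow_He i n (le_of_lt (Finset.mem_range.mp hi)),
    if_neg (Nat.ne_of_lt (Finset.mem_range.mp hi)), mul_zero]

/-- **Gauss–Hermite quadrature (probabilist normalization).**
Let `x 0 < ⋯ < x (n-1)` be the `n` distinct real roots of the probabilist Hermite
polynomial `He_n` and let `w k = n!·√(2π) / He_n′(x k)²`.  Then the `n`-point rule
with these nodes and weights integrates exactly every real polynomial of degree
at most `2n - 1` against the weight `e^{-x²/2}`. -/
theorem gauss_hermite_quadrature (n : ℕ) (hn : 1 ≤ n)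
    (x : Fin n → ℝ) (hmono : StrictMono x)
    (hroot : ∀ k : Fin n, Polynomial.aeval (x k) (Polynomial.hermite n) = 0)
    (hall : ∀ y : ℝ, Polynomial.aeval y (Polynomial.hermite n) = 0 → ∃ k : Fin n, y = x k)
    (w : Fin n → ℝ)
    (hw : ∀ k : Fin n, w k =
      (Nat.factorial n : ℝ) * Real.sqrt (2 * π) /
        (Polynomial.eval (x k)
          (Polynomial.derivative ((Polynomial.hermite n).map (Int.castRingHom ℝ)))) ^ 2) :
    ∀ p : Polynomial ℝ, p.natDegree ≤ 2 * n - 1 →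
      ∫ t : ℝ, Polynomial.eval t p * Real.exp (-t ^ 2 / 2) =
        ∑ k : Fin n, w k * Polynomial.eval (x k) p := by
  intro p hp
  obtain ⟨m, rfl⟩ : ∃ m, n = m + 1 := ⟨n - 1, by omega⟩
  have hinj : Function.Injective x := hmono.injective
  have heval : ∀ k, Polynomial.eval (x k) (He (m + 1)) = 0 := by
    intro k
    have h1 : Polynomial.eval (x k) (He (m + 1)) = aeval (x k) (Polynomial.hermite (m + 1)) := by
      rw [He, Polynomial.eval_map, aeval_def, algebraMap_int_eq]
    rw [h1]; exact hroot k
  -- factorization into linear factors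
  have hprod : He (m + 1) = ∏ k : Fin (m + 1), (X - C (x k)) := by
    set G := ∏ k : Fin (m + 1), (X - C (x k)) with hGdef
    have hGmonic : G.Monic := monic_prod_of_monic _ _ fun k _ => monic_X_sub_C (x k)
    have hGdeg : G.natDegree = m + 1 := by
      rw [hGdef, natDegree_prod _ _ (fun k _ => X_sub_C_ne_zero (x k))]
      simp
    have hGeval : ∀ k, Polynomial.eval (x k) G = 0 := fun k => by
      rw [hGdef, eval_prod]
      exact Finset.prod_eq_zero (Finset.mem_univ k) (by simp)
    by_contra hne
    have hsub : He (m + 1) - G ≠ 0 := sub_ne_zero.mpr hne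
    have hdegH : (He (m + 1)).degree = ((m + 1 : ℕ) : WithBot ℕ) := by
      rw [degree_eq_natDegree (He_monic (m + 1)).ne_zero, He_natDegree]
    have hdegG : G.degree = ((m + 1 : ℕ) : WithBot ℕ) := by
      rw [degree_eq_natDegree hGmonic.ne_zero, hGdeg]
    have hdeglt : (He (m + 1) - G).degree < ((m + 1 : ℕ) : WithBot ℕ) := by
      rw [← hdegH]
      exact degree_sub_lt (hdegH.trans hdegG.symm) (He_monic (m + 1)).ne_zero
        (by rw [(He_monic (m + 1)).leadingCoeff, hGmonic.leadingCoeff])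
    have hnatlt : (He (m + 1) - G).natDegree < m + 1 :=
      (Polynomial.natDegree_lt_iff_degree_lt hsub).mpr hdeglt
    exact hsub (Polynomial.eq_zero_of_natDegree_lt_card_of_eval_eq_zero _ hinj
      (fun k => by rw [eval_sub, heval k, hGeval k, sub_zero])
      (by simpa using hnatlt))
  -- the co-factors
  set q : Fin (m + 1) → ℝ[X] := fun k => ∏ i ∈ Finset.univ.erase k, (X - C (x i)) with hqdef
  have hHq : ∀ k, He (m + 1) = (X - C (x k)) * q k := fun k => by
    rw [hprod, hqdef, ← Finset.mul_prod_erase _ _ (Finset.mem_univ k)]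
  have hqeval_ne : ∀ k, Polynomial.eval (x k) (q k) ≠ 0 := by
    intro k
    rw [hqdef, eval_prod]
    refine Finset.prod_ne_zero_iff.mpr fun i hi => ?_
    simp only [eval_sub, eval_X, eval_C]
    exact sub_ne_zero.mpr fun h => (Finset.mem_erase.mp hi).1 (hinj h.symm)
  have hqeval_zero : ∀ k j, j ≠ k → Polynomial.eval (x j) (q k) = 0 := by
    intro k j hjk
    rw [hqdef, eval_prod]
    exact Finset.prod_eq_zero (Finset.mem_erase.mpr ⟨hjk, Finset.mem_univ j⟩) (by simp)
  have hderiv_eval : ∀ k, Polynomial.eval (x k) (derivative (He (m + 1)))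
      = Polynomial.eval (x k) (q k) := by
    intro k
    have hd : derivative (He (m + 1)) = q k + (X - C (x k)) * derivative (q k) := by
      conv_lhs => rw [hHq k]
      rw [derivative_mul, derivative_sub, derivative_X, derivative_C, sub_zero, one_mul]
    rw [hd]
    simp
  have hDk : ∀ k, Polynomial.eval (x k) (q k)
      = ((m : ℝ) + 1) * Polynomial.eval (x k) (He m) := by
    intro k
    rw [← hderiv_eval k, derivative_He m]
    simp
  have hHem_ne : ∀ k, Polynomial.eval (x k) (He m) ≠ 0 := by
    intro k
    intro hz
    apply hqeval_ne k
    rw [hDk k, hz, mul_zero]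
  have hfacm : ((m.factorial : ℝ)) ≠ 0 := by exact_mod_cast m.factorial_ne_zero
  -- integral of the co-factors
  have hint_q : ∀ k, ∫ t : ℝ, Polynomial.eval t (q k) * Real.exp (-t ^ 2 / 2)
      = (m.factorial : ℝ) * Real.sqrt (2 * π) / Polynomial.eval (x k) (He m) := by
    intro k
    set c : ℝ := Polynomial.eval (x k) (He m) / (m.factorial : ℝ) with hc
    have hcne : c ≠ 0 := div_ne_zero (hHem_ne k) hfacm
    set S : ℝ[X] := ∑ j ∈ Finset.range (m + 1),
      C (Polynomial.eval (x k) (He j) / (j.factorial : ℝ)) * He j with hSdef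
    have hkey : (X - C (x k)) * S = (X - C (x k)) * (C c * q k) := by
      apply Polynomial.funext
      intro t
      have hcd := CD m t (x k)
      rw [heval k, mul_zero, sub_zero] at hcd
      have hSe : Polynomial.eval t S = ∑ j ∈ Finset.range (m + 1),
          Polynomial.eval t (He j) * Polynomial.eval (x k) (He j) / (j.factorial : ℝ) := by
        rw [hSdef, Polynomial.eval_finset_sum]
        refine Finset.sum_congr rfl fun j _ => ?_
        rw [eval_mul, eval_C]
        ring
      have hq_t : (t - x k) * Polynomial.eval t (q k) = Polynomial.eval t (He (m + 1)) := by
        rw [hHq k]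
        simp
      simp only [eval_mul, eval_sub, eval_X, eval_C]
      rw [hSe, hcd, hc,
        show (t - x k) * (Polynomial.eval (x k) (He m) / (m.factorial : ℝ) *
            Polynomial.eval t (q k))
          = Polynomial.eval (x k) (He m) / (m.factorial : ℝ) *
            ((t - x k) * Polynomial.eval t (q k)) from by ring, hq_t]
      ring
    have hS_eq : S = C c * q k := mul_left_cancel₀ (X_sub_C_ne_zero (x k)) hkey
    have hint_S : ∫ t : ℝ, Polynomial.eval t S * Real.exp (-t ^ 2 / 2) = Real.sqrt (2 * π) := by
      have hfun : (fun t : ℝ => Polynomial.eval t S * Real.exp (-t ^ 2 / 2))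
          = fun t : ℝ => ∑ j ∈ Finset.range (m + 1),
              (Polynomial.eval (x k) (He j) / (j.factorial : ℝ)) *
                (Polynomial.eval t (He j) * Real.exp (-t ^ 2 / 2)) := by
        funext t
        rw [hSdef, Polynomial.eval_finset_sum, Finset.sum_mul]
        refine Finset.sum_congr rfl fun j _ => ?_
        rw [eval_mul, eval_C]
        ring
      rw [hfun, integral_finset_sum _ (fun j _ => (integrable_eval_gauss _).const_mul _)]
      rw [Finset.sum_eq_single_of_mem 0 (Finset.mem_range.mpr (Nat.succ_pos m))]
      · rw [integral_const_mul, integral_He_gauss 0, if_pos rfl, He_zero]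
        simp
      · intro j _ hj
        rw [integral_const_mul, integral_He_gauss j, if_neg hj, mul_zero]
    have h2 : ∫ t : ℝ, Polynomial.eval t S * Real.exp (-t ^ 2 / 2)
        = c * ∫ t : ℝ, Polynomial.eval t (q k) * Real.exp (-t ^ 2 / 2) := by
      rw [hS_eq]
      simp_rw [eval_mul, eval_C, mul_assoc]
      rw [integral_const_mul]
    rw [hint_S] at h2
    rw [eq_div_iff (hHem_ne k)]
    rw [h2, hc]
    field_simp
  -- division with remainder
  have hmonic := He_monic (m + 1)
  set r : ℝ[X] := p %ₘ He (m + 1) with hrdef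
  set s : ℝ[X] := p /ₘ He (m + 1) with hsdef
  have hps : p = r + He (m + 1) * s := (modByMonic_add_div p (He (m + 1))).symm
  have hrdeg : r.natDegree < m + 1 := by
    have := natDegree_modByMonic_lt p hmonic (fun h1 => by
      have := He_natDegree (m + 1); rw [h1] at this; simp at this)
    rwa [He_natDegree] at this
  have hsdeg : s.natDegree < m + 1 := by
    rw [hsdef, natDegree_divByMonic p hmonic, He_natDegree]
    omega
  have hpr : ∀ k, Polynomial.eval (x k) p = Polynomial.eval (x k) r := by
    intro k
    conv_lhs => rw [hps]
    rw [eval_add, eval_mul, heval k, zero_mul, add_zero]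
  have hint_p : (∫ t : ℝ, Polynomial.eval t p * Real.exp (-t ^ 2 / 2))
      = ∫ t : ℝ, Polynomial.eval t r * Real.exp (-t ^ 2 / 2) := by
    have hfun : (fun t : ℝ => Polynomial.eval t p * Real.exp (-t ^ 2 / 2))
        = fun t : ℝ => Polynomial.eval t r * Real.exp (-t ^ 2 / 2)
          + Polynomial.eval t (s * He (m + 1)) * Real.exp (-t ^ 2 / 2) := by
      funext t
      conv_lhs => rw [hps]
      simp only [eval_add, eval_mul]
      ring
    rw [hfun, integral_add (integrable_eval_gauss r) (integrable_eval_gauss _),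
      integral_Q_mul_He (m + 1) s hsdeg, add_zero]
  -- Lagrange interpolation of r
  have hinterp : r = ∑ k : Fin (m + 1),
      C (Polynomial.eval (x k) r / Polynomial.eval (x k) (q k)) * q k := by
    have hqdeg : ∀ k, (q k).natDegree ≤ m := by
      intro k
      refine le_trans (natDegree_prod_le _ _) ?_
      refine le_trans (Finset.sum_le_card_nsmul _ _ 1 fun i _ => ?_) ?_
      · exact natDegree_X_sub_C_le _
      · simp [Finset.card_erase_of_mem]
    have hTdeg : (r - ∑ k : Fin (m + 1),
        C (Polynomial.eval (x k) r / Polynomial.eval (x k) (q k)) * q k).natDegree < m + 1 := by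
      refine lt_of_le_of_lt (natDegree_sub_le _ _) ?_
      have h1 : (∑ k : Fin (m + 1),
          C (Polynomial.eval (x k) r / Polynomial.eval (x k) (q k)) * q k).natDegree ≤ m := by
        refine natDegree_sum_le_of_forall_le _ _ fun k _ => ?_
        exact le_trans (natDegree_C_mul_le _ _) (hqdeg k)
      omega
    have hTeval : ∀ j, Polynomial.eval (x j) (r - ∑ k : Fin (m + 1),
        C (Polynomial.eval (x k) r / Polynomial.eval (x k) (q k)) * q k) = 0 := by
      intro j
      rw [eval_sub, Polynomial.eval_finset_sum]
      have : ∑ k : Fin (m + 1), Polynomial.eval (x j)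
          (C (Polynomial.eval (x k) r / Polynomial.eval (x k) (q k)) * q k)
          = Polynomial.eval (x j) r := by
        rw [Finset.sum_eq_single_of_mem j (Finset.mem_univ j)]
        · rw [eval_mul, eval_C, div_mul_cancel₀ _ (hqeval_ne j)]
        · intro k _ hkj
          rw [eval_mul, hqeval_zero k j (Ne.symm hkj), mul_zero]
      rw [this, sub_self]
    have := Polynomial.eq_zero_of_natDegree_lt_card_of_eval_eq_zero _ hinj hTeval
      (by simpa using hTdeg)
    exact sub_eq_zero.mp this
  -- compute the integral of r
  have hint_r : (∫ t : ℝ, Polynomial.eval t r * Real.exp (-t ^ 2 / 2))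
      = ∑ k : Fin (m + 1), (Polynomial.eval (x k) r / Polynomial.eval (x k) (q k)) *
          ((m.factorial : ℝ) * Real.sqrt (2 * π) / Polynomial.eval (x k) (He m)) := by
    have hfun : (fun t : ℝ => Polynomial.eval t r * Real.exp (-t ^ 2 / 2))
        = fun t : ℝ => ∑ k : Fin (m + 1),
            (Polynomial.eval (x k) r / Polynomial.eval (x k) (q k)) *
              (Polynomial.eval t (q k) * Real.exp (-t ^ 2 / 2)) := by
      funext t
      conv_lhs => rw [hinterp]
      rw [Polynomial.eval_finset_sum, Finset.sum_mul]
      refine Finset.sum_congr rfl fun k _ => ?_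
      rw [eval_mul, eval_C]
      ring
    rw [hfun, integral_finset_sum _ (fun k _ => (integrable_eval_gauss _).const_mul _)]
    refine Finset.sum_congr rfl fun k _ => ?_
    rw [integral_const_mul, hint_q k]
  -- conclusion
  rw [hint_p, hint_r]
  refine Finset.sum_congr rfl fun k _ => ?_
  rw [hw k, hpr k]
  have hDeq : Polynomial.eval (x k)
      (Polynomial.derivative ((Polynomial.hermite (m + 1)).map (Int.castRingHom ℝ)))
      = Polynomial.eval (x k) (q k) := hderiv_eval k
  rw [hDeq, hDk k]
  have hfac1 : (((m + 1).factorial : ℝ)) = ((m : ℝ) + 1) * (m.factorial : ℝ) := by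
    push_cast [Nat.factorial_succ]; ring
  rw [hfac1]
  have hm1 : ((m : ℝ) + 1) ≠ 0 := by positivity
  field_simp [hHem_ne k]
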